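/- For a graph G with maximum degree d, every root λ of the independence polynomial I(G,x) satisfies |λ| > e^{-1}/(d+1). -/

import Mathlib

open Classical

/-- `S` is an independent set of vertices of `G`. -/
def IsIndep {V : Type*} (G : SimpleGraph V) (S : Finset V) : Prop :=
  ∀ a ∈ S, ∀ b ∈ S, ¬ G.Adj a b

/-- `i_k(G)`: the number of independent vertex sets of size `k`. -/
noncomputable def numIndep {V : Type*} (G : SimpleGraph V) (k : ℕ) : ℕ :=
  {S : Finset V | IsIndep G S ∧ S.card = k}.ncard

/-- The independence polynomial `I(G,x) = Σ_k i_k(G) x^k`. -/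
noncomputable def indepPoly {V : Type*} [Fintype V] (G : SimpleGraph V) (x : ℂ) : ℂ :=
  ∑ k ∈ Finset.range (Fintype.card V + 1), (numIndep G k : ℂ) * x ^ k

noncomputable def IP {V : Type*} (G : SimpleGraph V) (A : Finset V) (x : ℂ) : ℂ :=
  ∑ S ∈ A.powerset.filter (fun S => IsIndep G S), x ^ S.card

lemma IP_empty {V : Type*} (G : SimpleGraph V) (x : ℂ) : IP G ∅ x = 1 := by
  rw [IP]
  rw [Finset.powerset_empty, Finset.filter_singleton]
  simp [IsIndep]

lemma indep_subset {V : Type*} {G : SimpleGraph V} {S T : Finset V} (h : T ⊆ S)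
    (hS : IsIndep G S) : IsIndep G T := fun a ha b hb => hS a (h ha) b (h hb)

lemma IP_rec {V : Type*} (G : SimpleGraph V) (A : Finset V) (v : V) (hv : v ∈ A) (x : ℂ) :
    IP G A x = IP G (A.erase v) x
      + x * IP G (A.filter (fun u => u ≠ v ∧ ¬ G.Adj v u)) x := by
  classical
  rw [IP, ← Finset.sum_filter_add_sum_filter_not _ (fun S => v ∉ S)]
  congr 1
  · rw [IP]
    congr 1
    ext S
    simp only [Finset.mem_filter, Finset.mem_powerset, Finset.subset_erase]
    tauto
  · rw [IP, Finset.mul_sum]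
    refine Finset.sum_nbij' (fun S => S.erase v) (fun T => insert v T) ?_ ?_ ?_ ?_ ?_
    · intro S hS
      simp only [Finset.mem_filter, Finset.mem_powerset, not_not] at hS ⊢
      obtain ⟨⟨hSA, hSind⟩, hvS⟩ := hS
      refine ⟨?_, indep_subset (Finset.erase_subset _ _) hSind⟩
      intro u hu
      simp only [Finset.mem_erase] at hu
      simp only [Finset.mem_filter]
      exact ⟨hSA hu.2, hu.1, hSind v hvS u hu.2⟩
    · intro T hT
      simp only [Finset.mem_filter, Finset.mem_powerset, not_not] at hT ⊢
      obtain ⟨hTA, hTind⟩ := hT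
      have hTprop : ∀ u ∈ T, u ≠ v ∧ ¬ G.Adj v u := by
        intro u hu
        have := hTA hu
        simp only [Finset.mem_filter] at this
        exact this.2
      refine ⟨⟨?_, ?_⟩, Finset.mem_insert_self _ _⟩
      · intro u hu
        rcases Finset.mem_insert.mp hu with rfl | hu
        · exact hv
        · have := hTA hu; simp only [Finset.mem_filter] at this; exact this.1
      · intro a ha b hb
        rcases Finset.mem_insert.mp ha with h1 | h1 <;>
          rcases Finset.mem_insert.mp hb with h2 | h2
        · rw [h1, h2]; exact G.irrefl
        · rw [h1]; exact (hTprop b h2).2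
        · rw [h2]; exact fun h => (hTprop a h1).2 (G.adj_symm h)
        · exact hTind a h1 b h2
    · intro S hS
      simp only [Finset.mem_filter, not_not] at hS
      exact Finset.insert_erase hS.2
    · intro T hT
      simp only [Finset.mem_filter, Finset.mem_powerset] at hT
      apply Finset.erase_insert
      intro hvT
      exact ((Finset.mem_filter.mp (hT.1 hvT)).2.1 rfl)
    · intro S hS
      simp only [Finset.mem_filter, not_not] at hS
      rw [Finset.card_erase_of_mem hS.2]
      have : 1 ≤ S.card := Finset.card_pos.mpr ⟨v, hS.2⟩
      rw [← pow_succ']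
      congr 1
      omega

lemma abs_add_lower (a b : ℂ) : ‖a‖ - ‖b‖ ≤ ‖a + b‖ := by
  have h := norm_add_le (a + b) (-b)
  simp only [add_neg_cancel_right, norm_neg] at h
  linarith

lemma IP_lower {V : Type*} (G : SimpleGraph V) (B : Finset V) (u : V) (hu : u ∈ B)
    (lam : ℂ) (c : ℝ)
    (h : ‖lam * IP G (B.filter (fun w => w ≠ u ∧ ¬ G.Adj u w)) lam‖
      ≤ c * ‖IP G (B.erase u) lam‖) :
    (1 - c) * ‖IP G (B.erase u) lam‖ ≤ ‖IP G B lam‖ := by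
  rw [IP_rec G B u hu lam]
  have := abs_add_lower (IP G (B.erase u) lam)
    (lam * IP G (B.filter (fun w => w ≠ u ∧ ¬ G.Adj u w)) lam)
  nlinarith [this]

lemma shrink {V : Type*} (G : SimpleGraph V) (lam : ℂ) (c : ℝ) (hc1 : c ≤ 1) :
    ∀ n : ℕ, ∀ F B : Finset V, F.card = n → F ⊆ B →
    (∀ C ⊆ B, ∀ u ∈ C,
      ‖lam * IP G (C.filter (fun w => w ≠ u ∧ ¬ G.Adj u w)) lam‖
        ≤ c * ‖IP G (C.erase u) lam‖) →
    (1 - c) ^ F.card * ‖IP G (B \ F) lam‖ ≤ ‖IP G B lam‖ := by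
  intro n
  induction n with
  | zero =>
    intro F B hF hFB H
    rw [Finset.card_eq_zero] at hF
    subst hF
    simp
  | succ n ih =>
    intro F B hF hFB H
    obtain ⟨u, hu⟩ := Finset.card_pos.mp (by omega : 0 < F.card)
    have huB : u ∈ B := hFB hu
    have hstep := IP_lower G B u huB lam c (H B (Finset.Subset.refl B) u huB)
    have hrec := ih (F.erase u) (B.erase u) (by rw [Finset.card_erase_of_mem hu]; omega)
      (Finset.erase_subset_erase u hFB)
      (fun C hC => H C (hC.trans (Finset.erase_subset u B)))
    have hset : (B.erase u) \ (F.erase u) = B \ F := by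
      ext w
      simp only [Finset.mem_sdiff, Finset.mem_erase]
      constructor
      · rintro ⟨⟨hwu, hwB⟩, hw⟩
        exact ⟨hwB, fun hwF => hw ⟨hwu, hwF⟩⟩
      · rintro ⟨hwB, hwF⟩
        exact ⟨⟨fun h => hwF (h ▸ hu), hwB⟩, fun h => hwF h.2⟩
    rw [hset, Finset.card_erase_of_mem hu, hF] at hrec
    simp only [Nat.add_sub_cancel] at hrec
    rw [hF, pow_succ', mul_assoc]
    have h0 : 0 ≤ (1 : ℝ) - c := by linarith
    calc (1 - c) * ((1 - c) ^ n * ‖IP G (B \ F) lam‖)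
        ≤ (1 - c) * ‖IP G (B.erase u) lam‖ :=
          mul_le_mul_of_nonneg_left hrec h0
      _ ≤ ‖IP G B lam‖ := hstep

lemma good {V : Type*} [Fintype V] (G : SimpleGraph V) (d : ℕ)
    (hdeg : ∀ v : V, (G.neighborSet v).ncard ≤ d)
    (lam : ℂ) (c : ℝ) (hc0 : 0 < c) (hc1 : c < 1)
    (hlam : ‖lam‖ ≤ c * (1 - c) ^ d) :
    ∀ A : Finset V, IP G A lam ≠ 0 ∧ ∀ v ∈ A,
      ‖lam * IP G (A.filter fun u => u ≠ v ∧ ¬ G.Adj v u) lam‖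
        ≤ c * ‖IP G (A.erase v) lam‖ := by
  intro A
  induction A using Finset.strongInductionOn with
  | _ A IH =>
  have h2 : ∀ v ∈ A,
      ‖lam * IP G (A.filter fun u => u ≠ v ∧ ¬ G.Adj v u) lam‖
        ≤ c * ‖IP G (A.erase v) lam‖ := by
    intro v hv
    set B := A.erase v with hB
    set F := B.filter (fun u => G.Adj v u) with hF
    have hFd : F.card ≤ d := by
      have hfin : (G.neighborSet v).Finite := Set.toFinite _
      have hsub : F ⊆ hfin.toFinset := by
        intro u hu
        rw [Set.Finite.mem_toFinset]
        exact (Finset.mem_filter.mp hu).2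
      calc F.card ≤ hfin.toFinset.card := Finset.card_le_card hsub
        _ = (G.neighborSet v).ncard := (Set.ncard_eq_toFinset_card _ hfin).symm
        _ ≤ d := hdeg v
    have H : ∀ C ⊆ B, ∀ u ∈ C,
        ‖lam * IP G (C.filter (fun w => w ≠ u ∧ ¬ G.Adj u w)) lam‖
          ≤ c * ‖IP G (C.erase u) lam‖ := by
      intro C hC u hu
      exact (IH C (Finset.ssubset_of_subset_of_ssubset hC (Finset.erase_ssubset hv))).2 u hu
    have hs := shrink G lam c hc1.le F.card F B rfl (Finset.filter_subset _ _) H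
    have hBF : B \ F = A.filter (fun u => u ≠ v ∧ ¬ G.Adj v u) := by
      ext w
      simp only [Finset.mem_sdiff, Finset.mem_filter, hF, hB, Finset.mem_erase]
      tauto
    rw [← hBF, norm_mul]
    have ynn : 0 ≤ ‖IP G (B \ F) lam‖ := norm_nonneg _
    calc ‖lam‖ * ‖IP G (B \ F) lam‖
        ≤ (c * (1 - c) ^ d) * ‖IP G (B \ F) lam‖ :=
          mul_le_mul_of_nonneg_right hlam ynn
      _ ≤ (c * (1 - c) ^ F.card) * ‖IP G (B \ F) lam‖ := by
          have hp : (1 - c) ^ d ≤ (1 - c) ^ F.card :=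
            pow_le_pow_of_le_one (by linarith) (by linarith) hFd
          exact mul_le_mul_of_nonneg_right
            (mul_le_mul_of_nonneg_left hp hc0.le) ynn
      _ = c * ((1 - c) ^ F.card * ‖IP G (B \ F) lam‖) := by ring
      _ ≤ c * ‖IP G B lam‖ := mul_le_mul_of_nonneg_left hs hc0.le
  refine ⟨?_, h2⟩
  rcases A.eq_empty_or_nonempty with rfl | ⟨v, hv⟩
  · rw [IP_empty]; exact one_ne_zero
  · have hb := IP_lower G A v hv lam c (h2 v hv)
    have hBne : IP G (A.erase v) lam ≠ 0 := (IH _ (Finset.erase_ssubset hv)).1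
    have hpos : 0 < ‖IP G A lam‖ :=
      lt_of_lt_of_le (mul_pos (by linarith) (norm_pos_iff.mpr hBne)) hb
    exact norm_pos_iff.mp hpos

lemma numIndep_eq {V : Type*} [Fintype V] (G : SimpleGraph V) (k : ℕ) :
    numIndep G k
      = ((Finset.univ.powerset.filter (fun S => IsIndep G S)).filter
          (fun S => S.card = k)).card := by
  classical
  rw [numIndep, Finset.filter_filter, Finset.powerset_univ]
  rw [Set.ncard_eq_toFinset_card']
  congr 1
  ext S
  simp

lemma indepPoly_eq_IP {V : Type*} [Fintype V] (G : SimpleGraph V) (x : ℂ) :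
    indepPoly G x = IP G Finset.univ x := by
  classical
  rw [indepPoly, IP]
  rw [← Finset.sum_fiberwise_of_maps_to
    (g := fun S : Finset V => S.card) (t := Finset.range (Fintype.card V + 1))
    (fun S _ => Finset.mem_range.mpr (Nat.lt_succ_of_le (Finset.card_le_univ S)))
    (fun S => x ^ S.card)]
  refine Finset.sum_congr rfl ?_
  intro k _
  rw [numIndep_eq, Finset.card_eq_sum_ones, Nat.cast_sum, Finset.sum_mul]
  refine Finset.sum_congr rfl ?_
  intro S hS
  have : S.card = k := (Finset.mem_filter.mp hS).2
  rw [this, Nat.cast_one, one_mul]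

lemma key_ineq (d : ℕ) (hd : 1 ≤ d) :
    Real.exp (-1) / ((d : ℝ) + 1)
      ≤ (1 / ((d : ℝ) + 1)) * (1 - 1 / ((d : ℝ) + 1)) ^ d := by
  have ht : (1 : ℝ) ≤ (d : ℝ) := by exact_mod_cast hd
  have ht0 : (0 : ℝ) < (d : ℝ) := by linarith
  have h1 : Real.exp (-(1 / (d : ℝ))) ≤ (d : ℝ) / ((d : ℝ) + 1) := by
    have hexp : 1 / (d : ℝ) + 1 ≤ Real.exp (1 / (d : ℝ)) := Real.add_one_le_exp _
    have heq : ((d : ℝ) + 1) / (d : ℝ) = 1 / (d : ℝ) + 1 := by field_simp; ring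
    have h := inv_anti₀ (by positivity : (0:ℝ) < ((d : ℝ) + 1) / (d : ℝ))
      (heq ▸ hexp)
    rw [Real.exp_neg]
    calc (Real.exp (1 / (d : ℝ)))⁻¹ ≤ (((d : ℝ) + 1) / (d : ℝ))⁻¹ := h
      _ = (d : ℝ) / ((d : ℝ) + 1) := by rw [inv_div]
  have h2 : Real.exp (-1) ≤ ((d : ℝ) / ((d : ℝ) + 1)) ^ d := by
    have : Real.exp (-(1 / (d : ℝ))) ^ d ≤ ((d : ℝ) / ((d : ℝ) + 1)) ^ d :=
      pow_le_pow_left₀ (Real.exp_pos _).le h1 d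
    calc Real.exp (-1) = Real.exp (-(1 / (d : ℝ))) ^ d := by
          rw [← Real.exp_nat_mul]
          congr 1
          field_simp
      _ ≤ _ := this
  have h3 : 1 - 1 / ((d : ℝ) + 1) = (d : ℝ) / ((d : ℝ) + 1) := by field_simp; ring
  rw [h3, div_le_iff₀ (by positivity : (0:ℝ) < (d : ℝ) + 1)]
  have hfin : 1 / ((d : ℝ) + 1) * ((d : ℝ) / ((d : ℝ) + 1)) ^ d * ((d : ℝ) + 1)
      = ((d : ℝ) / ((d : ℝ) + 1)) ^ d := by
    field_simp
  rw [hfin]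
  exact h2

/-- Every root `λ` of the independence polynomial of a graph of maximum degree at
most `d` satisfies `|λ| > e⁻¹/(d+1)`. -/
theorem indepPoly_root_abs_gt {V : Type*} [Fintype V] (G : SimpleGraph V) (d : ℕ)
    (hdeg : ∀ v : V, (G.neighborSet v).ncard ≤ d)
    (lam : ℂ) (hroot : indepPoly G lam = 0) :
    Real.exp (-1) / ((d : ℝ) + 1) < ‖lam‖ := by
  by_contra hcon
  push_neg at hcon
  rw [indepPoly_eq_IP] at hroot
  rcases Nat.eq_zero_or_pos d with rfl | hd
  · have hc1 : Real.exp (-1) < 1 := by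
      rw [Real.exp_lt_one_iff]; norm_num
    have hlam : ‖lam‖ ≤ Real.exp (-1) * (1 - Real.exp (-1)) ^ (0 : ℕ) := by
      simpa using hcon
    exact (good G 0 hdeg lam (Real.exp (-1)) (Real.exp_pos _) hc1 hlam Finset.univ).1 hroot
  · set c : ℝ := 1 / ((d : ℝ) + 1) with hc
    have hd1 : (1 : ℝ) ≤ (d : ℝ) := by exact_mod_cast hd
    have hc0 : 0 < c := by positivity
    have hc1 : c < 1 := by
      rw [hc, div_lt_one (by positivity)]; linarith
    have hlam : ‖lam‖ ≤ c * (1 - c) ^ d := hcon.trans (key_ineq d hd)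
    exact (good G d hdeg lam c hc0 hc1 hlam Finset.univ).1 hroot
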